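/- Let k be a field of characteristic p and let f be an automorphism of the Weyl algebra A_{n,k} such that f(x̂_i) has Bernstein degree ≤ N for all i. Then the induced map on the center sends each y_j = x̂_j^p to a polynomial in y_1,…,y_{2n} of total degree ≤ N. -/

import Mathlib

/-- The standard skew-symmetric matrix `ω_{ij} = δ_{i,n+j} - δ_{n+i,j}`. -/
def weylOmega (n : ℕ) (i j : Fin (2 * n)) : ℤ :=
  (if (i : ℕ) = n + (j : ℕ) then 1 else 0) - (if n + (i : ℕ) = (j : ℕ) then 1 else 0)

/-- The defining relations `x̂_i x̂_j - x̂_j x̂_i = ω_{ij}·1` of the Weyl algebra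
of index `n`. -/
inductive WeylRel (R : Type*) [CommRing R] (n : ℕ) :
    FreeAlgebra R (Fin (2 * n)) → FreeAlgebra R (Fin (2 * n)) → Prop
  | comm (i j : Fin (2 * n)) : WeylRel R n
      (FreeAlgebra.ι R i * FreeAlgebra.ι R j - FreeAlgebra.ι R j * FreeAlgebra.ι R i)
      ((weylOmega n i j : ℤ) : FreeAlgebra R (Fin (2 * n)))

/-- The Weyl algebra of index `n` over `R`. -/
abbrev WeylAlgebra (R : Type*) [CommRing R] (n : ℕ) := RingQuot (WeylRel R n)

/-- The generator `x̂_i` of the Weyl algebra. -/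
noncomputable def weylGen (R : Type*) [CommRing R] (n : ℕ) (i : Fin (2 * n)) :
    WeylAlgebra R n :=
  RingQuot.mkAlgHom R (WeylRel R n) (FreeAlgebra.ι R i)

/-- The subspace of elements of Bernstein degree `≤ N` in the Weyl algebra:
the span of the monomials `x̂^α = x̂_1^{α_1}⋯x̂_{2n}^{α_{2n}}` with `|α| ≤ N`. -/
noncomputable def bernsteinLE (k : Type*) [Field k] (n N : ℕ) :
    Submodule k (WeylAlgebra k n) :=
  Submodule.span k
    {m | ∃ α : Fin (2 * n) → ℕ, (∑ i, α i) ≤ N ∧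
      m = ((List.finRange (2 * n)).map fun i => weylGen k n i ^ α i).prod}

namespace WeylAux

variable {k : Type*} [Field k] {n : ℕ}

/-- structure constant in `k`. -/
def wk (k : Type*) [Field k] (n : ℕ) (i j : Fin (2 * n)) : k := ((weylOmega n i j : ℤ) : k)

theorem gen_comm (i j : Fin (2 * n)) :
    weylGen k n i * weylGen k n j = weylGen k n j * weylGen k n i + algebraMap k _ (wk k n i j) := by
  have h := RingQuot.mkAlgHom_rel k (WeylRel.comm (R := k) (n := n) i j)
  simp only [map_sub, map_mul] at h
  have h2 : (RingQuot.mkAlgHom k (WeylRel k n)) ((weylOmega n i j : ℤ) : FreeAlgebra k (Fin (2*n)))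
      = algebraMap k _ (wk k n i j) := by
    rw [wk, map_intCast, map_intCast]
  rw [h2] at h
  rw [weylGen, weylGen]
  exact sub_eq_iff_eq_add'.mp h

theorem gen_comm_pow (i j : Fin (2 * n)) (m : ℕ) :
    weylGen k n i * weylGen k n j ^ m = weylGen k n j ^ m * weylGen k n i
      + ((m : k) * wk k n i j) • weylGen k n j ^ (m - 1) := by
  induction m with
  | zero => simp
  | succ m ih =>
    have key : ((m : k) * wk k n i j) • (weylGen k n j ^ (m-1) * weylGen k n j)
        = ((m : k) * wk k n i j) • weylGen k n j ^ m := by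
      cases m with
      | zero => simp
      | succ m' => rw [Nat.add_sub_cancel, ← pow_succ]
    calc weylGen k n i * weylGen k n j ^ (m+1)
        = (weylGen k n i * weylGen k n j ^ m) * weylGen k n j := by rw [mul_assoc, ← pow_succ]
      _ = weylGen k n j ^ m * (weylGen k n i * weylGen k n j)
          + ((m : k) * wk k n i j) • (weylGen k n j ^ (m-1) * weylGen k n j) := by
          rw [ih]; rw [add_mul, smul_mul_assoc, mul_assoc]
      _ = weylGen k n j ^ m * (weylGen k n j * weylGen k n i + algebraMap k _ (wk k n i j))
          + ((m : k) * wk k n i j) • weylGen k n j ^ m := by rw [gen_comm, key]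
      _ = weylGen k n j ^ (m+1) * weylGen k n i
          + (((m+1 : ℕ) : k) * wk k n i j) • weylGen k n j ^ ((m+1) - 1) := by
          rw [Nat.add_sub_cancel, mul_add, ← mul_assoc, ← pow_succ,
            ← Algebra.commutes (wk k n i j) (weylGen k n j ^ m), ← Algebra.smul_def,
            add_assoc, ← add_smul]
          congr 1
          push_cast
          ring


noncomputable def P (k : Type*) [Field k] (n : ℕ) (l : List (Fin (2*n))) (α : Fin (2*n) → ℕ) :
    WeylAlgebra k n :=
  (l.map fun j => weylGen k n j ^ α j).prod

noncomputable def M (k : Type*) [Field k] (n : ℕ) (α : Fin (2*n) → ℕ) : WeylAlgebra k n :=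
  P k n (List.finRange (2*n)) α

theorem P_cons (a : Fin (2*n)) (t : List (Fin (2*n))) (α : Fin (2*n) → ℕ) :
    P k n (a :: t) α = weylGen k n a ^ α a * P k n t α := by
  simp [P]

theorem P_congr {l : List (Fin (2*n))} {α β : Fin (2*n) → ℕ} (h : ∀ j ∈ l, α j = β j) :
    P k n l α = P k n l β := by
  unfold P
  congr 1
  exact List.map_congr_left (fun j hj => by rw [h j hj])

theorem P_eq_one {l : List (Fin (2*n))} {α : Fin (2*n) → ℕ} (h : ∀ j ∈ l, α j = 0) :
    P k n l α = 1 := by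
  apply List.prod_eq_one
  intro x hx
  rcases List.mem_map.mp hx with ⟨j, hj, rfl⟩
  rw [h j hj, pow_zero]

theorem P_mul_gen {l : List (Fin (2*n))} (hl : l.Pairwise (· < ·)) {i : Fin (2*n)} (hi : i ∈ l)
    {α : Fin (2*n) → ℕ} (hα : ∀ j ∈ l, i < j → α j = 0) :
    P k n l α * weylGen k n i = P k n l (α + Pi.single i 1) := by
  induction l with
  | nil => simp at hi
  | cons a t ih =>
    rw [List.pairwise_cons] at hl
    obtain ⟨ha, ht⟩ := hl
    rw [P_cons, P_cons]
    by_cases hai : a = i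
    · subst hai
      have h1 : P k n t α = 1 := P_eq_one (fun j hj => hα j (List.mem_cons_of_mem _ hj) (ha j hj))
      have h2 : P k n t (α + Pi.single a 1) = 1 := by
        apply P_eq_one
        intro j hj
        have : j ≠ a := fun h => absurd (h ▸ ha j hj) (lt_irrefl _)
        simp [Pi.single_eq_of_ne this, hα j (List.mem_cons_of_mem _ hj) (ha j hj)]
      rw [h1, h2, Pi.add_apply, Pi.single_eq_same, mul_one, mul_one, pow_succ]
    · have hit : i ∈ t := (List.mem_cons.mp hi).resolve_left (fun h => hai h.symm)
      have h1 : (α + Pi.single i 1 : Fin (2*n) → ℕ) a = α a := by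
        simp [Pi.single_eq_of_ne hai]
      rw [h1, mul_assoc, ih ht hit (fun j hj hij => hα j (List.mem_cons_of_mem _ hj) hij)]

theorem gen_mul_P {l : List (Fin (2*n))} (hl : l.Nodup) (i : Fin (2*n)) (α : Fin (2*n) → ℕ) :
    weylGen k n i * P k n l α = P k n l α * weylGen k n i +
      (l.map fun j => ((α j : k) * wk k n i j) • P k n l (α - Pi.single j 1)).sum := by
  induction l with
  | nil => simp [P]
  | cons a t ih =>
    rw [List.nodup_cons] at hl
    obtain ⟨hat, ht⟩ := hl
    rw [P_cons]
    calc weylGen k n i * (weylGen k n a ^ α a * P k n t α)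
        = (weylGen k n i * weylGen k n a ^ α a) * P k n t α := by rw [mul_assoc]
      _ = weylGen k n a ^ α a * (weylGen k n i * P k n t α)
          + ((α a : k) * wk k n i a) • (weylGen k n a ^ (α a - 1) * P k n t α) := by
          rw [gen_comm_pow, add_mul, smul_mul_assoc, mul_assoc]
      _ = weylGen k n a ^ α a * (P k n t α * weylGen k n i)
          + (weylGen k n a ^ α a * (t.map fun j => ((α j : k) * wk k n i j) • P k n t (α - Pi.single j 1)).sum
          + ((α a : k) * wk k n i a) • (weylGen k n a ^ (α a - 1) * P k n t α)) := by
          rw [ih ht, mul_add, add_assoc]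
      _ = P k n (a :: t) α * weylGen k n i +
          ((a :: t).map fun j => ((α j : k) * wk k n i j) • P k n (a :: t) (α - Pi.single j 1)).sum := by
          rw [P_cons, List.map_cons, List.sum_cons, mul_assoc]
          congr 1
          rw [add_comm]
          congr 1
          · -- head term
            have h1 : P k n t (α - Pi.single a 1) = P k n t α := by
              apply P_congr
              intro j hj
              have : j ≠ a := fun h => hat (h ▸ hj)
              simp [Pi.single_eq_of_ne this]
            rw [P_cons, h1]
            have h2 : (α - Pi.single a 1 : Fin (2*n) → ℕ) a = α a - 1 := by
              simp
            rw [h2]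
          · -- tail terms
            rw [← List.sum_map_mul_left]
            congr 1
            apply List.map_congr_left
            intro j hj
            have hja : a ≠ j := fun h => hat (h ▸ hj)
            rw [mul_smul_comm, P_cons]
            have : (α - Pi.single j 1 : Fin (2*n) → ℕ) a = α a := by
              simp [Pi.single_eq_of_ne hja]
            rw [this]


variable (k) (n) in
theorem bernsteinLE_mono {N N' : ℕ} (h : N ≤ N') : bernsteinLE k n N ≤ bernsteinLE k n N' := by
  apply Submodule.span_mono
  rintro m ⟨α, hα, rfl⟩
  exact ⟨α, hα.trans h, rfl⟩

theorem M_mem {α : Fin (2*n) → ℕ} {N : ℕ} (h : (∑ i, α i) ≤ N) : M k n α ∈ bernsteinLE k n N :=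
  Submodule.subset_span ⟨α, h, rfl⟩

theorem one_mem_LE (N : ℕ) : (1 : WeylAlgebra k n) ∈ bernsteinLE k n N := by
  have : M k n 0 = 1 := P_eq_one (fun _ _ => rfl)
  rw [← this]
  exact M_mem (by simp)

theorem M_mul_gen_eq {α : Fin (2*n) → ℕ} {i : Fin (2*n)} (h : ∀ j, i < j → α j = 0) :
    M k n α * weylGen k n i = M k n (α + Pi.single i 1) :=
  P_mul_gen (List.pairwise_lt_finRange _) (List.mem_finRange i) (fun j _ hij => h j hij)

theorem sum_add_single (α : Fin (2*n) → ℕ) (i : Fin (2*n)) :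
    ∑ x, (α + Pi.single i 1 : Fin (2*n) → ℕ) x = (∑ x, α x) + 1 := by
  simp [Finset.sum_add_distrib]

/-- key straightening lemma -/
theorem M_mul_gen_mem : ∀ (s K : ℕ) (α : Fin (2*n) → ℕ) (i : Fin (2*n)),
    (∑ j ∈ Finset.univ.filter (fun j => i < j), α j) ≤ s →
    (∀ j, α j ≠ 0 → (j:ℕ) ≤ K) → ((i:ℕ) ≤ K) →
    M k n α * weylGen k n i ∈ Submodule.span k
      {m | ∃ β : Fin (2*n) → ℕ, (∑ x, β x) ≤ (∑ x, α x) + 1 ∧ (∀ j, β j ≠ 0 → (j:ℕ) ≤ K) ∧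
        m = M k n β} := by
  intro s
  induction s with
  | zero =>
    intro K α i hs hK hiK
    have h0 : ∀ j, i < j → α j = 0 := by
      intro j hij
      by_contra h
      have := Finset.single_le_sum (f := α) (s := Finset.univ.filter (fun j => i < j))
        (fun x _ => Nat.zero_le _) (Finset.mem_filter.mpr ⟨Finset.mem_univ j, hij⟩)
      omega
    rw [M_mul_gen_eq h0]
    apply Submodule.subset_span
    refine ⟨_, le_of_eq (sum_add_single α i), ?_, rfl⟩
    intro j hj
    by_cases hji : j = i
    · exact hji ▸ hiK
    · apply hK
      intro h
      apply hj
      simp [h, Pi.single_eq_of_ne hji]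
  | succ s ih =>
    intro K α i hs hK hiK
    by_cases hs' : (∑ j ∈ Finset.univ.filter (fun j => i < j), α j) ≤ s
    · exact ih K α i hs' hK hiK
    -- there is j > i with α j ≠ 0
    have hex : ∃ j, i < j ∧ α j ≠ 0 := by
      by_contra h
      push_neg at h
      have : (∑ j ∈ Finset.univ.filter (fun j => i < j), α j) = 0 :=
        Finset.sum_eq_zero (fun j hj => h j (Finset.mem_filter.mp hj).2)
      omega
    obtain ⟨j0, hj0i, hj0⟩ := hex
    set T := Finset.univ.filter (fun j => α j ≠ 0) with hT
    have hTne : T.Nonempty := ⟨j0, by simp [hT, hj0]⟩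
    set j1 := T.max' hTne with hj1def
    have hj1mem : α j1 ≠ 0 := by
      have := T.max'_mem hTne
      simpa [hT] using this
    have hmax : ∀ j, α j ≠ 0 → j ≤ j1 := fun j hj => T.le_max' j (by simp [hT, hj])
    have hij1 : i < j1 := lt_of_lt_of_le hj0i (hmax j0 hj0)
    have hj1K : (j1 : ℕ) ≤ K := hK j1 hj1mem
    set α' := α - Pi.single j1 1 with hα'
    have hα'j1 : α' j1 = α j1 - 1 := by simp [hα']
    have hα'ne : ∀ j, j ≠ j1 → α' j = α j := by
      intro j hj; simp [hα', Pi.single_eq_of_ne hj]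
    have hsum' : (∑ x, α' x) + 1 = ∑ x, α x := by
      have e1 : (∑ x ∈ Finset.univ.erase j1, α' x) = ∑ x ∈ Finset.univ.erase j1, α x :=
        Finset.sum_congr rfl (fun j hj => hα'ne j (Finset.ne_of_mem_erase hj))
      have e2 : (∑ x ∈ Finset.univ.erase j1, α' x) + α' j1 = ∑ x, α' x :=
        Finset.sum_erase_add _ _ (Finset.mem_univ j1)
      have e3 : (∑ x ∈ Finset.univ.erase j1, α x) + α j1 = ∑ x, α x :=
        Finset.sum_erase_add _ _ (Finset.mem_univ j1)
      have e4 : 1 ≤ α j1 := Nat.one_le_iff_ne_zero.mpr hj1mem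
      omega
    -- reconstruct M α
    have hrec : M k n α' * weylGen k n j1 = M k n α := by
      rw [M_mul_gen_eq (fun j hj => by
        rw [hα'ne j (ne_of_gt hj)]
        by_contra h
        exact absurd (hmax j h) (not_le.mpr hj))]
      congr 1
      funext j
      by_cases hj : j = j1
      · subst hj; simp [hα'j1]; omega
      · simp [hα'ne j hj, Pi.single_eq_of_ne hj]
    have hmeas : (∑ j ∈ Finset.univ.filter (fun j => i < j), α' j) ≤ s := by
      have h1 : (∑ j ∈ Finset.univ.filter (fun j => i < j), α j) ≤ s + 1 := hs
      have hj1f : j1 ∈ Finset.univ.filter (fun j => i < j) := by simp [hij1]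
      have e1 : (∑ x ∈ (Finset.univ.filter (fun j => i < j)).erase j1, α' x)
          = ∑ x ∈ (Finset.univ.filter (fun j => i < j)).erase j1, α x :=
        Finset.sum_congr rfl (fun j hj => hα'ne j (Finset.ne_of_mem_erase hj))
      have e2 : (∑ x ∈ (Finset.univ.filter (fun j => i < j)).erase j1, α' x) + α' j1
          = ∑ j ∈ Finset.univ.filter (fun j => i < j), α' j :=
        Finset.sum_erase_add _ _ hj1f
      have e3 : (∑ x ∈ (Finset.univ.filter (fun j => i < j)).erase j1, α x) + α j1
          = ∑ j ∈ Finset.univ.filter (fun j => i < j), α j :=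
        Finset.sum_erase_add _ _ hj1f
      have e4 : 1 ≤ α j1 := Nat.one_le_iff_ne_zero.mpr hj1mem
      omega
    have hIH := ih j1 α' i hmeas
      (fun j hj => by
        by_cases h : j = j1
        · exact h ▸ le_refl _
        · rw [hα'ne j h] at hj
          by_contra hc
          exact absurd (hmax j hj) (by omega))
      (le_of_lt hij1)
    -- M α * G i = (M α' * G i) * G j1 + wk j1 i • M α'
    have hkey : M k n α * weylGen k n i
        = (M k n α' * weylGen k n i) * weylGen k n j1 + wk k n j1 i • M k n α' := by
      rw [← hrec, mul_assoc, gen_comm j1 i, mul_add, ← mul_assoc,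
        ← Algebra.commutes (wk k n j1 i) (M k n α'), ← Algebra.smul_def]
    rw [hkey]
    set S := {m | ∃ β : Fin (2*n) → ℕ, (∑ x, β x) ≤ (∑ x, α x) + 1 ∧ (∀ j, β j ≠ 0 → (j:ℕ) ≤ K) ∧
        m = M k n β} with hS
    apply Submodule.add_mem
    · -- push through right multiplication by G j1
      have hstep : ∀ m ∈ {m | ∃ β : Fin (2*n) → ℕ, (∑ x, β x) ≤ (∑ x, α' x) + 1 ∧
          (∀ j, β j ≠ 0 → (j:ℕ) ≤ (j1:ℕ)) ∧ m = M k n β},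
          m * weylGen k n j1 ∈ Submodule.span k S := by
        rintro m ⟨β, hβsum, hβsupp, rfl⟩
        rw [M_mul_gen_eq (fun j hj => by
          by_contra h
          exact absurd (hβsupp j h) (by exact_mod_cast not_le.mpr hj))]
        apply Submodule.subset_span
        refine ⟨_, ?_, ?_, rfl⟩
        · rw [sum_add_single]
          omega
        · intro j hj
          by_cases hjj : j = j1
          · exact hjj ▸ hj1K
          · refine le_trans (hβsupp j ?_) hj1K
            intro h
            apply hj
            simp [h, Pi.single_eq_of_ne hjj]
      refine Submodule.span_induction (fun m hm => hstep m hm) (by simp)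
        (fun x y _ _ hx hy => by rw [add_mul]; exact Submodule.add_mem _ hx hy)
        (fun c x _ hx => by rw [smul_mul_assoc]; exact Submodule.smul_mem _ c hx) hIH
    · apply Submodule.smul_mem
      apply Submodule.subset_span
      exact ⟨α', by omega, fun j hj => by
        by_cases h : j = j1
        · exact h ▸ hj1K
        · exact hK j (by rwa [hα'ne j h] at hj), rfl⟩


theorem mul_gen_mem {d : ℕ} {z : WeylAlgebra k n} (hz : z ∈ bernsteinLE k n d) (i : Fin (2*n)) :
    z * weylGen k n i ∈ bernsteinLE k n (d + 1) := by
  refine Submodule.span_induction ?_ (by simp) ?_ ?_ hz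
  · rintro m ⟨α, hα, rfl⟩
    have h := M_mul_gen_mem (k := k) (∑ j ∈ Finset.univ.filter (fun j => i < j), α j) (2*n) α i
      (le_refl _) (fun j _ => le_of_lt j.isLt) (le_of_lt i.isLt)
    have hM : M k n α = ((List.finRange (2 * n)).map fun i => weylGen k n i ^ α i).prod := rfl
    rw [← hM]
    refine Submodule.span_le.mpr ?_ h
    rintro m ⟨β, hβ, _, rfl⟩
    exact Submodule.subset_span ⟨β, by omega, rfl⟩
  · intro x y _ _ hx hy
    rw [add_mul]; exact Submodule.add_mem _ hx hy
  · intro c x _ hx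
    rw [smul_mul_assoc]; exact Submodule.smul_mem _ c hx

theorem mul_gen_pow_mem {d : ℕ} {z : WeylAlgebra k n} (hz : z ∈ bernsteinLE k n d)
    (i : Fin (2*n)) (m : ℕ) : z * weylGen k n i ^ m ∈ bernsteinLE k n (d + m) := by
  induction m with
  | zero => simpa using hz
  | succ m ih =>
    have h := mul_gen_mem ih i
    rw [mul_assoc, ← pow_succ] at h
    have he : d + m + 1 = d + (m + 1) := by omega
    rwa [he] at h

theorem mul_P_mem {d : ℕ} {z : WeylAlgebra k n} (hz : z ∈ bernsteinLE k n d)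
    (l : List (Fin (2*n))) (β : Fin (2*n) → ℕ) :
    z * P k n l β ∈ bernsteinLE k n (d + (l.map β).sum) := by
  induction l generalizing z d with
  | nil => simpa [P] using hz
  | cons a t ih =>
    rw [P_cons, ← mul_assoc]
    have h1 := mul_gen_pow_mem hz a (β a)
    have h2 := ih h1
    rw [List.map_cons, List.sum_cons]
    have : d + β a + (t.map β).sum = d + (β a + (t.map β).sum) := by omega
    rwa [this] at h2

theorem mul_mem_LE {d e : ℕ} {z w : WeylAlgebra k n} (hz : z ∈ bernsteinLE k n d)
    (hw : w ∈ bernsteinLE k n e) : z * w ∈ bernsteinLE k n (d + e) := by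
  refine Submodule.span_induction ?_ (by simp) ?_ ?_ hw
  · rintro m ⟨β, hβ, rfl⟩
    have h := mul_P_mem hz (List.finRange (2*n)) β
    have hsum : ((List.finRange (2*n)).map β).sum = ∑ x, β x := (Fin.sum_univ_def β).symm
    rw [hsum] at h
    exact bernsteinLE_mono k n (by omega) h
  · intro x y _ _ hx hy
    rw [mul_add]; exact Submodule.add_mem _ hx hy
  · intro c x _ hx
    rw [mul_smul_comm]; exact Submodule.smul_mem _ c hx

theorem pow_mem_LE {N : ℕ} {w : WeylAlgebra k n} (hw : w ∈ bernsteinLE k n N) (m : ℕ) :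
    w ^ m ∈ bernsteinLE k n (m * N) := by
  induction m with
  | zero => simpa using one_mem_LE 0
  | succ m ih =>
    rw [pow_succ]
    have h := mul_mem_LE ih hw
    have he : m * N + N = (m + 1) * N := by ring
    rwa [he] at h



open MvPolynomial in
theorem pderiv_comm' (a b : Fin (2*n)) (f : MvPolynomial (Fin (2*n)) k) :
    pderiv a (pderiv b f) = pderiv b (pderiv a f) := by
  classical
  have h : ⁅pderiv (R := k) a, pderiv (R := k) b⁆
      = (0 : Derivation k (MvPolynomial (Fin (2*n)) k) (MvPolynomial (Fin (2*n)) k)) := by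
    apply derivation_ext
    intro i
    rw [Derivation.commutator_apply, pderiv_X, pderiv_X]
    have e1 : (Pi.single (M := fun _ => MvPolynomial (Fin (2*n)) k) b 1 i) = if i = b then 1 else 0 := by
      by_cases h : i = b
      · subst h; simp
      · simp [Pi.single_eq_of_ne h, h]
    have e2 : (Pi.single (M := fun _ => MvPolynomial (Fin (2*n)) k) a 1 i) = if i = a then 1 else 0 := by
      by_cases h : i = a
      · subst h; simp
      · simp [Pi.single_eq_of_ne h, h]
    rw [e1, e2]
    split_ifs <;> simp [pderiv_one]
  have := congrArg (fun D => Derivation.toLinearMap D f) h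
  simpa [Derivation.commutator_apply, sub_eq_zero, LieRing.of_associative_ring_bracket,
    Module.End.mul_apply] using this

/-- the partial-derivative part of the generator's action -/
noncomputable def Dop (k : Type*) [Field k] (n : ℕ) (i : Fin (2*n)) :
    Module.End k (MvPolynomial (Fin (2*n)) k) :=
  if h : n ≤ (i : ℕ) then
    (MvPolynomial.pderiv (⟨(i:ℕ) - n, by have := i.isLt; omega⟩ : Fin (2*n))).toLinearMap
  else 0

theorem Dop_of_ge {i : Fin (2*n)} (hi : n ≤ (i : ℕ)) :
    Dop k n i = (MvPolynomial.pderiv (⟨(i:ℕ) - n, by have := i.isLt; omega⟩ : Fin (2*n))).toLinearMap :=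
  dif_pos hi

theorem Dop_of_lt {i : Fin (2*n)} (hi : ¬ n ≤ (i : ℕ)) : Dop k n i = 0 := dif_neg hi

/-- action of generator `i` on polynomials -/
noncomputable def op (k : Type*) [Field k] (n : ℕ) (i : Fin (2*n)) :
    Module.End k (MvPolynomial (Fin (2*n)) k) :=
  LinearMap.mulLeft k (MvPolynomial.X i) + Dop k n i

open MvPolynomial in
theorem op_comm (i j : Fin (2*n)) :
    op k n i * op k n j - op k n j * op k n i
      = ((weylOmega n i j : ℤ) : Module.End k (MvPolynomial (Fin (2*n)) k)) := by
  classical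
  apply LinearMap.ext
  intro f
  rw [weylOmega]
  by_cases hi : n ≤ (i : ℕ) <;> by_cases hj : n ≤ (j : ℕ)
  · -- both ≥ n
    set a : Fin (2*n) := ⟨(i:ℕ) - n, by have := i.isLt; omega⟩ with hadef
    set b : Fin (2*n) := ⟨(j:ℕ) - n, by have := j.isLt; omega⟩ with hbdef
    simp only [LinearMap.sub_apply, Module.End.mul_apply, Module.End.intCast_apply, op,
      LinearMap.add_apply, LinearMap.mulLeft_apply, map_add, Dop_of_ge hi, Dop_of_ge hj,
      Derivation.coeFn_coe]
    have hab1 : pderiv (R := k) a (X j * f) = X j * pderiv a f := by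
      rw [pderiv_mul, pderiv_X_of_ne, zero_mul, zero_add]
      intro h
      have : (j:ℕ) = (i:ℕ) - n := congrArg Fin.val h
      omega
    have hab2 : pderiv (R := k) b (X i * f) = X i * pderiv b f := by
      rw [pderiv_mul, pderiv_X_of_ne, zero_mul, zero_add]
      intro h
      have : (i:ℕ) = (j:ℕ) - n := congrArg Fin.val h
      omega
    have hw1 : ¬ ((i:ℕ) = n + (j:ℕ)) := by omega
    have hw2 : ¬ (n + (i:ℕ) = (j:ℕ)) := by omega
    rw [hab1, hab2, if_neg hw1, if_neg hw2, pderiv_comm' a b f]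
    norm_num
    ring
  · -- i ≥ n, j < n
    set a : Fin (2*n) := ⟨(i:ℕ) - n, by have := i.isLt; omega⟩ with hadef
    simp only [LinearMap.sub_apply, Module.End.mul_apply, Module.End.intCast_apply, op,
      LinearMap.add_apply, LinearMap.mulLeft_apply, map_add, Dop_of_ge hi, Dop_of_lt hj,
      Derivation.coeFn_coe, LinearMap.zero_apply, add_zero, zero_add, map_zero]
    have hw2 : ¬ (n + (i:ℕ) = (j:ℕ)) := by omega
    by_cases h : (i:ℕ) = n + (j:ℕ)
    · have hps : pderiv (R := k) a (X j) = 1 := by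
        have hja : j = a := by
          apply Fin.ext
          simp only [hadef]
          omega
        rw [hja, pderiv_X_self]
      rw [pderiv_mul, hps, one_mul, if_pos h, if_neg hw2]
      norm_num
      ring
    · have hja : j ≠ a := by
        intro hc
        have : (j:ℕ) = (i:ℕ) - n := congrArg Fin.val hc
        omega
      rw [pderiv_mul, pderiv_X_of_ne hja, zero_mul, zero_add, if_neg h, if_neg hw2]
      norm_num
      ring
  · -- i < n, j ≥ n
    set b : Fin (2*n) := ⟨(j:ℕ) - n, by have := j.isLt; omega⟩ with hbdef
    simp only [LinearMap.sub_apply, Module.End.mul_apply, Module.End.intCast_apply, op,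
      LinearMap.add_apply, LinearMap.mulLeft_apply, map_add, Dop_of_lt hi, Dop_of_ge hj,
      Derivation.coeFn_coe, LinearMap.zero_apply, add_zero, zero_add, map_zero]
    have hw1 : ¬ ((i:ℕ) = n + (j:ℕ)) := by omega
    by_cases h : n + (i:ℕ) = (j:ℕ)
    · have hps : pderiv (R := k) b (X i) = 1 := by
        have hib : i = b := by
          apply Fin.ext
          simp only [hbdef]
          omega
        rw [hib, pderiv_X_self]
      rw [pderiv_mul, hps, one_mul, if_neg hw1, if_pos h]
      norm_num
      ring
    · have hib : i ≠ b := by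
        intro hc
        have : (i:ℕ) = (j:ℕ) - n := congrArg Fin.val hc
        omega
      rw [pderiv_mul, pderiv_X_of_ne hib, zero_mul, zero_add, if_neg hw1, if_neg h]
      norm_num
      ring
  · -- both < n
    simp only [LinearMap.sub_apply, Module.End.mul_apply, Module.End.intCast_apply, op,
      LinearMap.add_apply, LinearMap.mulLeft_apply, Dop_of_lt hi, Dop_of_lt hj,
      LinearMap.zero_apply, add_zero, zero_add]
    have hw1 : ¬ ((i:ℕ) = n + (j:ℕ)) := by omega
    have hw2 : ¬ (n + (i:ℕ) = (j:ℕ)) := by omega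
    rw [if_neg hw1, if_neg hw2]
    norm_num
    ring


/-- the representation of the Weyl algebra on polynomials -/
noncomputable def rho (k : Type*) [Field k] (n : ℕ) :
    WeylAlgebra k n →ₐ[k] Module.End k (MvPolynomial (Fin (2*n)) k) :=
  RingQuot.liftAlgHom k ⟨FreeAlgebra.lift k (op k n), by
    rintro x y ⟨i, j⟩
    rw [map_sub, map_mul, map_mul, map_intCast]
    simp only [FreeAlgebra.lift_ι_apply]
    exact op_comm i j⟩

theorem rho_gen (i : Fin (2*n)) : rho k n (weylGen k n i) = op k n i := by
  rw [weylGen, rho, RingQuot.liftAlgHom_mkAlgHom_apply, FreeAlgebra.lift_ι_apply]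

/-- evaluation of the representation at 1: the symbol map -/
noncomputable def eps (k : Type*) [Field k] (n : ℕ) : WeylAlgebra k n →ₗ[k] MvPolynomial (Fin (2*n)) k :=
  { toFun := fun z => rho k n z 1
    map_add' := by intro x y; simp only [map_add, LinearMap.add_apply]
    map_smul' := by intro c x; simp only [map_smul, LinearMap.smul_apply, RingHom.id_apply] }

open MvPolynomial in
theorem op_apply_of_vars {i : Fin (2*n)} {g : MvPolynomial (Fin (2*n)) k}
    (hg : ∀ v ∈ g.vars, i ≤ v) : op k n i g = X i * g := by
  rw [op, LinearMap.add_apply, LinearMap.mulLeft_apply]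
  suffices h : Dop k n i g = 0 by rw [h, add_zero]
  by_cases hi : n ≤ (i:ℕ)
  · rw [Dop_of_ge hi]
    apply pderiv_eq_zero_of_notMem_vars
    intro hc
    have := hg _ hc
    have h2 : (⟨(i:ℕ) - n, by have := i.isLt; omega⟩ : Fin (2*n)) < i := by
      rw [Fin.lt_def]
      simp only
      omega
    exact absurd this (not_le.mpr h2)
  · rw [Dop_of_lt hi, LinearMap.zero_apply]

open MvPolynomial in
theorem op_pow_apply_of_vars {i : Fin (2*n)} {g : MvPolynomial (Fin (2*n)) k}
    (hg : ∀ v ∈ g.vars, i ≤ v) (m : ℕ) : (op k n i ^ m) g = X i ^ m * g := by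
  classical
  induction m with
  | zero => simp
  | succ m ih =>
    rw [pow_succ', Module.End.mul_apply, ih, op_apply_of_vars, ← mul_assoc, ← pow_succ']
    intro v hv
    have h1 := vars_mul (X i ^ m) g hv
    rcases Finset.mem_union.mp h1 with h | h
    · have h2 := vars_pow (X i) m h
      rw [vars_X] at h2
      rw [Finset.mem_singleton] at h2
      exact h2 ▸ le_refl i
    · exact hg v h

open MvPolynomial in
theorem vars_list_prod_lt {c : Fin (2*n)} {α : Fin (2*n) → ℕ} :
    ∀ (l : List (Fin (2*n))), (∀ j ∈ l, c < j) →
    ∀ v ∈ ((l.map fun j => (X j : MvPolynomial (Fin (2*n)) k) ^ α j).prod).vars, c < v := by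
  classical
  intro l
  induction l with
  | nil => intro _ v hv; simp [vars_one] at hv
  | cons a t ih =>
    intro hl v hv
    rw [List.map_cons, List.prod_cons] at hv
    have h1 := vars_mul _ _ hv
    rcases Finset.mem_union.mp h1 with h | h
    · have h2 := vars_pow (X a) (α a) h
      rw [vars_X, Finset.mem_singleton] at h2
      exact h2 ▸ hl a List.mem_cons_self
    · exact ih (fun j hj => hl j (List.mem_cons_of_mem a hj)) v h

open MvPolynomial in
theorem rho_P_one {α : Fin (2*n) → ℕ} :
    ∀ (l : List (Fin (2*n))), l.Pairwise (· < ·) →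
    rho k n (P k n l α) 1 = (l.map fun j => (X j : MvPolynomial (Fin (2*n)) k) ^ α j).prod := by
  intro l
  induction l with
  | nil => simp [P]
  | cons a t ih =>
    intro hl
    rw [List.pairwise_cons] at hl
    obtain ⟨ha, ht⟩ := hl
    rw [P_cons, map_mul, map_pow, rho_gen, Module.End.mul_apply, ih ht,
      List.map_cons, List.prod_cons]
    exact op_pow_apply_of_vars (fun v hv => le_of_lt (vars_list_prod_lt t ha v hv)) (α a)

open MvPolynomial in
theorem eps_M (α : Fin (2*n) → ℕ) :
    eps k n (M k n α) = monomial (Finsupp.equivFunOnFinite.symm α) 1 := by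
  have h1 : eps k n (M k n α) = rho k n (P k n (List.finRange (2*n)) α) 1 := rfl
  rw [h1, rho_P_one _ (List.pairwise_lt_finRange _)]
  rw [← Fin.prod_univ_def]
  rw [← prod_X_pow_eq_monomial]
  have h3 : ∏ x ∈ (Finsupp.equivFunOnFinite.symm α).support,
      (X x : MvPolynomial (Fin (2*n)) k) ^ α x = ∏ x, (X x : MvPolynomial (Fin (2*n)) k) ^ α x := by
    apply Finset.prod_subset (Finset.subset_univ _)
    intro x _ hx
    have h0 : (Finsupp.equivFunOnFinite.symm α) x = 0 := by
      simpa [Finsupp.notMem_support_iff] using hx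
    have h2 : (Finsupp.equivFunOnFinite.symm α) x = α x := rfl
    rw [h2] at h0
    rw [h0, pow_zero]
  rw [← h3]
  exact Finset.prod_congr rfl (fun x _ => rfl)


/-- linear combination of given Weyl-algebra elements with coefficients read off a polynomial -/
noncomputable def comb (k : Type*) [Field k] (n : ℕ)
    (v : (Fin (2*n) →₀ ℕ) → WeylAlgebra k n) :
    MvPolynomial (Fin (2*n)) k →ₗ[k] WeylAlgebra k n :=
  Module.Basis.constr (MvPolynomial.basisMonomials _ k) k v

theorem comb_monomial (v : (Fin (2*n) →₀ ℕ) → WeylAlgebra k n) (m : Fin (2*n) →₀ ℕ) (c : k) :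
    comb k n v (MvPolynomial.monomial m c) = c • v m := by
  have h1 : (MvPolynomial.monomial m c : MvPolynomial (Fin (2*n)) k)
      = c • MvPolynomial.monomial m 1 := by
    rw [MvPolynomial.smul_monomial, smul_eq_mul, mul_one]
  rw [h1, map_smul]
  congr 1
  have h2 : (MvPolynomial.monomial m (1:k)) = MvPolynomial.basisMonomials (Fin (2*n)) k m := by
    rw [MvPolynomial.coe_basisMonomials]
  rw [h2, comb, Module.Basis.constr_basis]

theorem comb_apply (v : (Fin (2*n) →₀ ℕ) → WeylAlgebra k n) (Q : MvPolynomial (Fin (2*n)) k) :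
    comb k n v Q = ∑ m ∈ Q.support, Q.coeff m • v m := by
  conv_lhs => rw [Q.as_sum]
  rw [map_sum]
  exact Finset.sum_congr rfl (fun m _ => comb_monomial v m _)

/-- reconstruction of a filtered element from its symbol -/
noncomputable def Psi (k : Type*) [Field k] (n : ℕ) :
    MvPolynomial (Fin (2*n)) k →ₗ[k] WeylAlgebra k n :=
  comb k n (fun m => M k n ⇑m)

theorem eps_reconstruct {d : ℕ} {z : WeylAlgebra k n} (hz : z ∈ bernsteinLE k n d) :
    Psi k n (eps k n z) = z ∧ (eps k n z).totalDegree ≤ d := by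
  refine Submodule.span_induction ?_ ?_ ?_ ?_ hz
  · rintro m ⟨α, hα, rfl⟩
    have hM : ((List.finRange (2 * n)).map fun i => weylGen k n i ^ α i).prod = M k n α := rfl
    rw [hM, eps_M]
    constructor
    · rw [Psi, comb_monomial, one_smul]
      congr 1
    · refine le_trans (MvPolynomial.totalDegree_monomial_le _ _) ?_
      rw [Finsupp.sum_fintype _ _ (fun _ => rfl)]
      simpa using hα
  · simp
  · intro x y _ _ hx hy
    refine ⟨by rw [map_add, map_add, hx.1, hy.1], ?_⟩
    rw [map_add]
    exact le_trans (MvPolynomial.totalDegree_add _ _) (max_le hx.2 hy.2)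
  · intro c x _ hx
    refine ⟨by rw [map_smul, map_smul, hx.1], ?_⟩
    rw [map_smul]
    exact le_trans (MvPolynomial.totalDegree_smul_le _ _) hx.2

theorem central_of_commute_gens {c : WeylAlgebra k n}
    (h : ∀ i, Commute c (weylGen k n i)) (a : WeylAlgebra k n) : Commute c a := by
  obtain ⟨b, rfl⟩ := RingQuot.mkAlgHom_surjective k (WeylRel k n) a
  induction b with
  | grade0 r =>
    rw [AlgHom.commutes]
    exact (Algebra.commutes r c).symm
  | grade1 x => exact h x
  | mul a b ha hb =>
    rw [map_mul]
    exact ha.mul_right hb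
  | add a b ha hb =>
    rw [map_add]
    exact ha.add_right hb

theorem exists_dual (l : Fin (2*n)) : ∃ (i : Fin (2*n)) (sgn : k), (sgn = 1 ∨ sgn = -1) ∧
    ∀ m : Fin (2*n), wk k n i m = if m = l then sgn else 0 := by
  have hl := l.isLt
  by_cases h : (l:ℕ) < n
  · refine ⟨⟨n + (l:ℕ), by omega⟩, 1, Or.inl rfl, fun m => ?_⟩
    rw [wk, weylOmega]
    show ((((if n + (l:ℕ) = n + (m:ℕ) then 1 else 0)
      - (if n + (n + (l:ℕ)) = (m:ℕ) then 1 else 0) : ℤ)) : k) = if m = l then 1 else 0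
    by_cases hm : m = l
    · have hv : (m:ℕ) = (l:ℕ) := congrArg Fin.val hm
      rw [if_pos (by omega), if_neg (by omega), if_pos hm]
      norm_num
    · have hv : (m:ℕ) ≠ (l:ℕ) := fun hc => hm (Fin.ext hc)
      rw [if_neg (by omega), if_neg (by omega), if_neg hm]
      norm_num
  · refine ⟨⟨(l:ℕ) - n, by omega⟩, -1, Or.inr rfl, fun m => ?_⟩
    rw [wk, weylOmega]
    show ((((if (l:ℕ) - n = n + (m:ℕ) then 1 else 0)
      - (if n + ((l:ℕ) - n) = (m:ℕ) then 1 else 0) : ℤ)) : k) = if m = l then -1 else 0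
    by_cases hm : m = l
    · have hv : (m:ℕ) = (l:ℕ) := congrArg Fin.val hm
      rw [if_neg (by omega), if_pos (by omega), if_pos hm]
      norm_num
    · have hv : (m:ℕ) ≠ (l:ℕ) := fun hc => hm (Fin.ext hc)
      rw [if_neg (by omega), if_neg (by omega), if_neg hm]
      norm_num

end WeylAux

open WeylAux in
/-- Let `k` be a field of characteristic `p` and `f` an automorphism of the Weyl
algebra `A_{n,k}` such that `f(x̂_i)` has Bernstein degree `≤ N` for all `i`.
Then the induced map on the center sends each `y_j = x̂_j^p` to a polynomial in
`y_1,…,y_{2n}` (with `y_i = x̂_i^p`) of total degree `≤ N`. -/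
theorem stmt19 (p : ℕ) [Fact p.Prime] (k : Type*) [Field k] [CharP k p]
    (n N : ℕ) (f : WeylAlgebra k n ≃ₐ[k] WeylAlgebra k n)
    (hf : ∀ i : Fin (2 * n), f (weylGen k n i) ∈ bernsteinLE k n N) :
    ∀ j : Fin (2 * n), ∃ Q : MvPolynomial (Fin (2 * n)) k,
      Q.totalDegree ≤ N ∧
      f (weylGen k n j ^ p) =
        ∑ m ∈ Q.support, Q.coeff m •
          ((List.finRange (2 * n)).map fun i => (weylGen k n i ^ p) ^ m i).prod := by
  intro j
  classical
  have hppos : 0 < p := (Fact.out : p.Prime).pos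
  set z := f (weylGen k n j ^ p) with hzdef
  have hz1 : z ∈ bernsteinLE k n (p*N) := by
    rw [hzdef, map_pow]
    exact pow_mem_LE (hf j) p
  have hpk : ((p:ℕ) : k) = 0 := CharP.cast_eq_zero k p
  have hcent : ∀ a, Commute (weylGen k n j ^ p) a := by
    refine fun a => central_of_commute_gens (fun i => ?_) a
    have hcp := gen_comm_pow (k := k) (n := n) i j p
    rw [hpk, zero_mul, zero_smul, add_zero] at hcp
    exact Commute.symm hcp
  have hzc : ∀ i, weylGen k n i * z = z * weylGen k n i := by
    intro i
    have h1 := hcent (f.symm (weylGen k n i))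
    have h2 := congrArg f h1
    rw [map_mul, map_mul, AlgEquiv.apply_symm_apply] at h2
    rw [hzdef]
    exact h2.symm
  obtain ⟨hrep, hdeg⟩ := eps_reconstruct hz1
  set Pz := eps k n z with hPdef
  have key : ∀ (l : Fin (2*n)) (β : Fin (2*n) →₀ ℕ), β ∈ Pz.support → (p:ℕ) ∣ β l := by
    intro l β0 hβ0
    by_cases hl0 : β0 l = 0
    · simp [hl0]
    obtain ⟨i, sgn, hsgn, hw⟩ := exists_dual (k := k) (n := n) l
    have hz2 : z = ∑ β ∈ Pz.support, Pz.coeff β • M k n ⇑β := by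
      conv_lhs => rw [← hrep]
      rw [Psi, comb_apply]
    have hsum0 : (0 : WeylAlgebra k n)
        = ∑ β ∈ Pz.support, (Pz.coeff β * ((β l : ℕ) : k) * sgn) • M k n (⇑β - Pi.single l 1) := by
      have hc0 : weylGen k n i * z - z * weylGen k n i = 0 := sub_eq_zero.mpr (hzc i)
      calc (0 : WeylAlgebra k n) = weylGen k n i * z - z * weylGen k n i := hc0.symm
        _ = ∑ β ∈ Pz.support, Pz.coeff β •
              (weylGen k n i * M k n ⇑β - M k n ⇑β * weylGen k n i) := by
            conv_lhs => rw [hz2]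
            rw [Finset.mul_sum, Finset.sum_mul, ← Finset.sum_sub_distrib]
            exact Finset.sum_congr rfl (fun β _ => by
              rw [mul_smul_comm, smul_mul_assoc]
              exact (smul_sub (Pz.coeff β) _ _).symm)
        _ = ∑ β ∈ Pz.support, (Pz.coeff β * ((β l : ℕ) : k) * sgn) • M k n (⇑β - Pi.single l 1) := by
            apply Finset.sum_congr rfl
            intro β _
            have hcomm := gen_mul_P (k := k) (List.nodup_finRange _) i ⇑β
            have hS : weylGen k n i * M k n ⇑β - M k n ⇑β * weylGen k n i
                = ((List.finRange (2*n)).map fun jj => (((β jj : ℕ):k) * wk k n i jj) •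
                    P k n (List.finRange (2*n)) (⇑β - Pi.single jj 1)).sum := by
              have hMP : M k n ⇑β = P k n (List.finRange (2*n)) ⇑β := rfl
              rw [hMP, hcomm, add_sub_cancel_left]
            rw [hS, ← Fin.sum_univ_def]
            rw [Finset.sum_eq_single l (fun jj _ hne => by
                rw [hw jj, if_neg hne, mul_zero, zero_smul]) (fun hni => absurd (Finset.mem_univ l) hni)]
            rw [hw l, if_pos rfl, smul_smul, ← mul_assoc]
            rfl
    have heps := congrArg (eps k n) hsum0
    rw [map_zero, map_sum] at heps
    simp only [map_smul, eps_M, MvPolynomial.smul_monomial, smul_eq_mul, mul_one] at heps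
    have hco := congrArg
      (MvPolynomial.coeff (Finsupp.equivFunOnFinite.symm (⇑β0 - Pi.single l 1))) heps
    rw [MvPolynomial.coeff_zero, MvPolynomial.coeff_sum] at hco
    simp only [MvPolynomial.coeff_monomial] at hco
    have hmain : ∀ b ∈ Pz.support, b ≠ β0 →
        (if Finsupp.equivFunOnFinite.symm (⇑b - Pi.single l 1)
            = Finsupp.equivFunOnFinite.symm (⇑β0 - Pi.single l 1)
          then Pz.coeff b * ((b l : ℕ):k) * sgn else 0) = 0 := by
      intro b _ hne
      by_cases hbl : ((b l : ℕ) : k) = 0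
      · rw [hbl, mul_zero, zero_mul]
        simp
      · rw [if_neg]
        intro hceq
        have hfun : (⇑b - Pi.single l 1 : Fin (2*n) → ℕ) = ⇑β0 - Pi.single l 1 :=
          Finsupp.equivFunOnFinite.symm.injective hceq
        apply hne
        have hbl' : b l ≠ 0 := by
          intro h0
          rw [h0] at hbl
          exact hbl (by norm_num)
        apply DFunLike.coe_injective
        funext m
        have hm := congrFun hfun m
        by_cases hml : m = l
        · subst hml
          simp only [Pi.sub_apply, Pi.single_eq_same] at hm
          have hm2 : b m - 1 = β0 m - 1 := hm
          have hb0 : β0 m ≠ 0 := hl0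
          have hb1 : b m ≠ 0 := hbl'
          clear hm
          show b m = β0 m
          omega
        · simpa [Pi.single_eq_of_ne hml] using hm
    rw [Finset.sum_eq_single β0 hmain (fun h => absurd hβ0 h), if_pos rfl] at hco
    have hc' : Pz.coeff β0 ≠ 0 := MvPolynomial.mem_support_iff.mp hβ0
    have hs' : sgn ≠ 0 := by
      rcases hsgn with rfl | rfl
      · exact one_ne_zero
      · exact neg_ne_zero.mpr one_ne_zero
    have hcast : ((β0 l : ℕ):k) = 0 := by
      rcases mul_eq_zero.mp hco.symm with h | h
      · rcases mul_eq_zero.mp h with h' | h'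
        · exact absurd h' hc'
        · exact h'
      · exact absurd h hs'
    exact (CharP.cast_eq_zero_iff k p _).mp hcast
  set Q : MvPolynomial (Fin (2*n)) k := ∑ β ∈ Pz.support,
    MvPolynomial.monomial (Finsupp.equivFunOnFinite.symm (fun i => β i / p)) (Pz.coeff β) with hQdef
  refine ⟨Q, ?_, ?_⟩
  · refine le_trans (MvPolynomial.totalDegree_finset_sum _ _) ?_
    apply Finset.sup_le
    intro β hβ
    refine le_trans (MvPolynomial.totalDegree_monomial_le _ _) ?_
    rw [Finsupp.sum_fintype _ _ (fun _ => rfl)]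
    have h1 : (∑ i, β i) ≤ p * N := by
      refine le_trans ?_ hdeg
      have h2 := MvPolynomial.le_totalDegree hβ
      rw [Finsupp.sum_fintype _ _ (fun _ => rfl)] at h2
      exact h2
    have h2 : p * (∑ i, (Finsupp.equivFunOnFinite.symm (fun i => β i / p)) i) = ∑ i, β i := by
      rw [Finset.mul_sum]
      apply Finset.sum_congr rfl
      intro i _
      have hcoe : (Finsupp.equivFunOnFinite.symm (fun i => β i / p)) i = β i / p := rfl
      rw [hcoe]
      exact Nat.mul_div_cancel' (key i β hβ)
    have h3 : (∑ i, id ((Finsupp.equivFunOnFinite.symm (fun i => β i / p)) i))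
        = ∑ i, (Finsupp.equivFunOnFinite.symm (fun i => β i / p)) i := rfl
    rw [h3]
    have h4 : p * (∑ i, (Finsupp.equivFunOnFinite.symm (fun i => β i / p)) i) ≤ p * N := by
      rw [h2]; exact h1
    exact Nat.le_of_mul_le_mul_left h4 hppos
  · have hgoal : (∑ m ∈ Q.support, Q.coeff m •
        ((List.finRange (2 * n)).map fun i => (weylGen k n i ^ p) ^ m i).prod)
        = comb k n (fun m => ((List.finRange (2 * n)).map fun i => (weylGen k n i ^ p) ^ m i).prod) Q :=
      (comb_apply _ _).symm
    rw [hgoal, hQdef, map_sum]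
    conv_lhs => rw [← hrep]
    rw [Psi, comb_apply]
    apply Finset.sum_congr rfl
    intro β hβ
    rw [comb_monomial]
    congr 1
    have hfac : ∀ i2 ∈ List.finRange (2*n), weylGen k n i2 ^ (β i2)
        = (weylGen k n i2 ^ p) ^ ((Finsupp.equivFunOnFinite.symm (fun i => β i / p)) i2) := by
      intro i2 _
      have hcoe : (Finsupp.equivFunOnFinite.symm (fun i => β i / p)) i2 = β i2 / p := rfl
      rw [hcoe, ← pow_mul, Nat.mul_div_cancel' (key i2 β hβ)]
    have hM : M k n ⇑β = ((List.finRange (2*n)).map fun i2 => weylGen k n i2 ^ (β i2)).prod := rfl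
    rw [hM]
    congr 1
    exact List.map_congr_left hfac
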